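/- For every real x > 0, g_π(x) ≤ V_0(x) < g_4(x), where g_k(x) = k / ((k−1) x + √(x² + k)). -/

import Mathlib

open MeasureTheory Real Set

/-- The `m = 0` one-dimensional regularized Coulomb potential `V_0(x)`. -/
noncomputable def V0 (x : ℝ) : ℝ :=
  ∫ u in Set.Ioi (0:ℝ), Real.exp (-u) / Real.sqrt (x ^ 2 + u)

/-- The comparison function `g_k(x) = k / ((k-1)x + √(x² + k))`. -/
noncomputable def g (k x : ℝ) : ℝ := k / ((k - 1) * x + Real.sqrt (x ^ 2 + k))

open Filter

/-- The tail Gaussian integral. -/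
noncomputable def J (x : ℝ) : ℝ := ∫ t in Ioi x, Real.exp (-t^2)

lemma intexp : Integrable (fun t : ℝ => Real.exp (-t^2)) := by
  simpa using integrable_exp_neg_mul_sq (b := 1) one_pos

lemma J_eq (x : ℝ) : J x = J 0 - ∫ t in (0:ℝ)..x, Real.exp (-t^2) := by
  rcases le_total 0 x with h | h
  · rw [intervalIntegral.integral_of_le h]
    have hu : Ioc 0 x ∪ Ioi x = Ioi (0:ℝ) := Ioc_union_Ioi_eq_Ioi h
    have := setIntegral_union (Ioc_disjoint_Ioi le_rfl) measurableSet_Ioi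
      (intexp.integrableOn (s := Ioc 0 x)) (intexp.integrableOn (s := Ioi x))
    rw [hu] at this
    simp only [J]; linarith [this]
  · rw [intervalIntegral.integral_symm, intervalIntegral.integral_of_le h]
    have hu : Ioc x 0 ∪ Ioi 0 = Ioi x := Ioc_union_Ioi_eq_Ioi h
    have := setIntegral_union (Ioc_disjoint_Ioi le_rfl) measurableSet_Ioi
      (intexp.integrableOn (s := Ioc x 0)) (intexp.integrableOn (s := Ioi 0))
    rw [hu] at this
    simp only [J]; linarith [this]

lemma J_deriv (x : ℝ) : HasDerivAt J (-(Real.exp (-x^2))) x := by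
  have : HasDerivAt (fun y => J 0 - ∫ t in (0:ℝ)..y, Real.exp (-t^2))
      (-(Real.exp (-x^2))) x := by
    have h2 : HasDerivAt (fun y => ∫ t in (0:ℝ)..y, Real.exp (-t^2)) (Real.exp (-x^2)) x :=
      intervalIntegral.integral_hasDerivAt_right intexp.intervalIntegrable
        intexp.aestronglyMeasurable.stronglyMeasurableAtFilter
        (Real.continuous_exp.comp (by continuity)).continuousAt
    simpa using (hasDerivAt_const x (J 0)).fun_sub h2
  exact this.congr_of_eventuallyEq (Eventually.of_forall fun y => (J_eq y))

lemma J_zero : J 0 = Real.sqrt Real.pi / 2 := by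
  have := integral_gaussian_Ioi 1
  simpa [J] using this

lemma J_nonneg (x : ℝ) : 0 ≤ J x :=
  setIntegral_nonneg measurableSet_Ioi fun t _ => (Real.exp_pos _).le

lemma J_le (x : ℝ) (hx : 1 ≤ x) : J x ≤ Real.exp (-x) := by
  have h1 : J x ≤ ∫ t in Ioi x, Real.exp (-t) := by
    have hi : IntegrableOn (fun t : ℝ => Real.exp (-t)) (Ioi x) :=
      (exp_neg_integrableOn_Ioi x one_pos).congr_fun (fun t _ => by norm_num) measurableSet_Ioi
    apply setIntegral_mono_on intexp.integrableOn hi measurableSet_Ioi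
    intro t ht
    have : x ≤ t := le_of_lt ht
    apply Real.exp_le_exp.2
    nlinarith
  rw [integral_exp_neg_Ioi] at h1
  exact h1

lemma J_tendsto : Tendsto J atTop (nhds 0) := by
  have h : Tendsto (fun x : ℝ => Real.exp (-x)) atTop (nhds 0) := tendsto_exp_neg_atTop_nhds_zero
  apply tendsto_of_tendsto_of_tendsto_of_le_of_le' tendsto_const_nhds h
  · exact Eventually.of_forall J_nonneg
  · filter_upwards [eventually_ge_atTop (1:ℝ)] with x hx using J_le x hx

lemma V0_eq (x : ℝ) (hx : 0 < x) : V0 x = 2 * Real.exp (x^2) * J x := by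
  have himg : (fun t : ℝ => t^2 - x^2) '' Ioi x = Ioi (0:ℝ) := by
    ext u
    constructor
    · rintro ⟨t, ht, rfl⟩
      have : x < t := ht
      have : 0 < t := lt_trans hx this
      simp only [mem_Ioi]
      nlinarith
    · intro hu
      refine ⟨Real.sqrt (x^2 + u), ?_, ?_⟩
      · have h1 : x^2 < x^2 + u := by linarith [mem_Ioi.1 hu]
        have := Real.sqrt_lt_sqrt (sq_nonneg x) h1
        rwa [Real.sqrt_sq hx.le] at this
      · show Real.sqrt (x^2+u) ^ 2 - x ^ 2 = u
        rw [Real.sq_sqrt (by nlinarith [mem_Ioi.1 hu] : (0:ℝ) ≤ x^2 + u)]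
        ring
  have hderiv : ∀ t ∈ Ioi x, HasDerivWithinAt (fun t : ℝ => t^2 - x^2) (2*t) (Ioi x) t := by
    intro t _
    have : HasDerivAt (fun t : ℝ => t^2 - x^2) (2*t) t := by
      simpa using ((hasDerivAt_pow 2 t).sub_const (x^2))
    exact this.hasDerivWithinAt
  have hinj : InjOn (fun t : ℝ => t^2 - x^2) (Ioi x) := by
    intro a ha b hb h
    simp only [mem_Ioi] at ha hb
    have ha0 : 0 < a := lt_trans hx ha
    have hb0 : 0 < b := lt_trans hx hb
    simp only at h
    have : a^2 = b^2 := by linarith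
    have h2 : (a - b) * (a + b) = 0 := by nlinarith
    rcases mul_eq_zero.1 h2 with h3 | h3
    · linarith
    · linarith
  have key := integral_image_eq_integral_abs_deriv_smul measurableSet_Ioi hderiv hinj
    (fun u => Real.exp (-u) / Real.sqrt (x ^ 2 + u))
  rw [himg] at key
  rw [V0, key]
  have hcongr : ∀ t ∈ Ioi x,
      |2*t| • (Real.exp (-(t^2 - x^2)) / Real.sqrt (x ^ 2 + (t^2 - x^2)))
        = 2 * Real.exp (x^2) * Real.exp (-t^2) := by
    intro t ht
    have ht0 : 0 < t := lt_trans hx ht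
    have h1 : x ^ 2 + (t^2 - x^2) = t^2 := by ring
    rw [h1, Real.sqrt_sq ht0.le, smul_eq_mul, abs_of_pos (by linarith)]
    rw [show -(t^2 - x^2) = x^2 + -t^2 by ring, Real.exp_add]
    field_simp
  rw [setIntegral_congr_fun measurableSet_Ioi hcongr]
  rw [MeasureTheory.integral_const_mul]
  rfl

lemma key_alg (k s y : ℝ) (hs : s^2 = y^2 + k) (hs0 : 0 < s) (hd : 0 < (k-1)*y + s)
    (hsy : 0 < s + y) :
    -2 + 2*y*(k/((k-1)*y+s)) + k*((k-1)+y/s)/((k-1)*y+s)^2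
      = k^2*((k-3)*s - y) / (((k-1)*y+s)^2 * s * (s+y)^2) := by
  set d := (k-1)*y + s with hd_def
  have hd0 : d ≠ 0 := ne_of_gt hd
  have hs0' : s ≠ 0 := ne_of_gt hs0
  have hsy0 : (s+y) ≠ 0 := ne_of_gt hsy
  have h1 : -2 + 2*y*(k/d) + k*((k-1)+y/s)/d^2
      = (-2*d^2*s + 2*k*y*d*s + k*((k-1)*s+y)) / (d^2*s) := by
    field_simp
  have h2 : (-2*d^2*s + 2*k*y*d*s + k*((k-1)*s+y)) * (s+y)^2 = k^2*((k-3)*s - y) := by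
    rw [hd_def]
    linear_combination ((-2:ℝ)*s^3 + (2:ℝ)*y^2*s + (-3:ℝ)*k*s + (-1:ℝ)*k*y + (-2:ℝ)*k*y*s^2
      + (-2:ℝ)*k*y^2*s + (1:ℝ)*k^2*s) * hs
  rw [h1, ← h2]
  rw [show d^2 * s * (s+y)^2 = (d^2*s) * (s+y)^2 by ring]
  rw [mul_div_mul_right _ _ (pow_ne_zero 2 hsy0)]

/-- The comparison function `ψ_k(y) = e^{-y²}(V_0(y) - g_k(y))` expressed via `J`. -/
noncomputable def psi (k y : ℝ) : ℝ := 2 * J y - Real.exp (-y^2) * g k y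

lemma psi_deriv (k y : ℝ) (hk : 1 < k) (hy : 0 ≤ y) :
    HasDerivAt (psi k)
      (Real.exp (-y^2) * (k^2*((k-3)*Real.sqrt (y^2+k) - y)
        / (((k-1)*y+Real.sqrt (y^2+k))^2 * Real.sqrt (y^2+k) * (Real.sqrt (y^2+k)+y)^2))) y := by
  have hk0 : 0 < k := lt_trans one_pos hk
  set s := Real.sqrt (y^2+k) with hs_def
  have harg : (0:ℝ) < y^2 + k := by positivity
  have hs2 : s^2 = y^2 + k := Real.sq_sqrt harg.le
  have hs0 : 0 < s := Real.sqrt_pos.2 harg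
  have hd : 0 < (k-1)*y + s := by nlinarith
  have hsy : 0 < s + y := by linarith
  have h1 : HasDerivAt (fun z : ℝ => z^2 + k) (2*y) y := by
    simpa using (hasDerivAt_pow 2 y).add_const k
  have hsq : HasDerivAt (fun z : ℝ => Real.sqrt (z^2+k)) ((2*y)/(2*s)) y :=
    h1.sqrt harg.ne'
  have hden : HasDerivAt (fun z : ℝ => (k-1)*z + Real.sqrt (z^2+k)) ((k-1) + (2*y)/(2*s)) y := by
    have := (hasDerivAt_id y).const_mul (k-1)
    simpa using this.fun_add hsq
  have hg : HasDerivAt (g k)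
      ((0 * ((k-1)*y + s) - k * ((k-1) + (2*y)/(2*s))) / ((k-1)*y + s)^2) y := by
    have := (hasDerivAt_const y k).fun_div hden (ne_of_gt hd)
    exact this
  have hexp : HasDerivAt (fun z : ℝ => Real.exp (-z^2)) (Real.exp (-y^2) * (-(2*y))) y := by
    have h : HasDerivAt (fun z : ℝ => -z^2) (-(2*y)) y := by
      simpa using (hasDerivAt_pow 2 y).fun_neg
    exact h.exp
  have htot := ((J_deriv y).const_mul 2).fun_sub (hexp.fun_mul hg)
  refine HasDerivAt.congr_deriv htot ?_
  rw [← key_alg k s y hs2 hs0 hd hsy]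
  simp only [g, ← hs_def]
  rw [mul_div_mul_left _ _ (two_ne_zero)]
  ring

lemma g_nonneg (k y : ℝ) (hk : 1 < k) (hy : 0 ≤ y) : 0 ≤ g k y := by
  have hk0 : 0 < k := lt_trans one_pos hk
  have : 0 < Real.sqrt (y^2+k) := Real.sqrt_pos.2 (by positivity)
  have hd : 0 < (k-1)*y + Real.sqrt (y^2+k) := by nlinarith
  exact le_of_lt (div_pos hk0 (by simpa [pow_two] using hd))

lemma psi_tendsto (k : ℝ) (hk : 1 < k) : Tendsto (psi k) atTop (nhds 0) := by
  have h1 : Tendsto (fun y => 2 * J y) atTop (nhds 0) := by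
    simpa using J_tendsto.const_mul 2
  have h2 : Tendsto (fun y => Real.exp (-y^2) * g k y) atTop (nhds 0) := by
    have hb : Tendsto (fun y : ℝ => (k/(k-1)) * Real.exp (-y)) atTop (nhds 0) := by
      simpa using (tendsto_exp_neg_atTop_nhds_zero.const_mul (k/(k-1)))
    apply tendsto_of_tendsto_of_tendsto_of_le_of_le' tendsto_const_nhds hb
    · filter_upwards [eventually_ge_atTop (1:ℝ)] with y hy
      exact mul_nonneg (Real.exp_pos _).le (g_nonneg k y hk (by linarith))
    · filter_upwards [eventually_ge_atTop (1:ℝ)] with y hy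
      have hy0 : (0:ℝ) ≤ y := by linarith
      have hs : 0 < Real.sqrt (y^2+k) := Real.sqrt_pos.2 (by nlinarith)
      have hd : (k-1)*y ≤ (k-1)*y + Real.sqrt (y^2+k) := by linarith
      have hky : 0 < (k-1)*y := by nlinarith
      have hgle : g k y ≤ k/((k-1)*y) := by
        apply div_le_div_of_nonneg_left (le_of_lt (lt_trans one_pos hk)) hky
        simpa [pow_two] using hd
      have h3 : k/((k-1)*y) ≤ k/(k-1) := by
        rw [div_le_div_iff₀ (by positivity) (by linarith)]
        nlinarith [mul_le_mul_of_nonneg_left hy (by nlinarith : (0:ℝ) ≤ k*(k-1))]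
      have hexp : Real.exp (-y^2) ≤ Real.exp (-y) := by
        apply Real.exp_le_exp.2; nlinarith
      calc Real.exp (-y^2) * g k y ≤ Real.exp (-y) * (k/(k-1)) := by
            apply mul_le_mul hexp (le_trans hgle h3) (g_nonneg k y hk hy0) (Real.exp_pos _).le
        _ = (k/(k-1)) * Real.exp (-y) := by ring
  have := h1.sub h2
  rw [sub_zero] at this
  exact this

lemma psi_pi_zero : psi Real.pi 0 = 0 := by
  have hpi : 0 < Real.pi := Real.pi_pos
  have hs : Real.sqrt ((0:ℝ)^2 + Real.pi) = Real.sqrt Real.pi := by norm_num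
  have hsp : Real.sqrt Real.pi ≠ 0 := by positivity
  have h1 : Real.pi / Real.sqrt Real.pi = Real.sqrt Real.pi := by
    rw [div_eq_iff hsp]; exact (Real.mul_self_sqrt hpi.le).symm
  simp only [psi, J_zero, g]
  norm_num [hs, h1]
  ring

set_option maxHeartbeats 1000000 in
lemma psi_pi_nonneg (x : ℝ) (hx : 0 < x) : 0 ≤ psi Real.pi x := by
  have hpi3 : (3:ℝ) < Real.pi := Real.pi_gt_three
  have hpi4 : Real.pi < 4 := by nlinarith [Real.pi_lt_d2]
  have hpi1 : (1:ℝ) < Real.pi := by linarith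
  set P := Real.pi with hP
  by_cases hc : x ≤ (P - 3) * Real.sqrt (x^2 + P)
  · -- ψ is monotone on [0, x], and ψ 0 = 0
    have hsx2 : (Real.sqrt (x^2+P))^2 = x^2 + P := Real.sq_sqrt (by positivity)
    have hsx0 : 0 ≤ Real.sqrt (x^2+P) := Real.sqrt_nonneg _
    have hxsq : x^2 ≤ (P-3)^2 * (x^2 + P) := by
      nlinarith [mul_self_le_mul_self hx.le hc]
    have hmono : MonotoneOn (psi P) (Icc 0 x) := by
      apply monotoneOn_of_deriv_nonneg (convex_Icc 0 x)
      · intro y hy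
        exact (psi_deriv P y hpi1 hy.1).continuousAt.continuousWithinAt
      · intro y hy
        rw [interior_Icc] at hy
        exact (psi_deriv P y hpi1 hy.1.le).differentiableAt.differentiableWithinAt
      · intro y hy
        rw [interior_Icc] at hy
        obtain ⟨hy0, hyx⟩ := hy
        rw [(psi_deriv P y hpi1 hy0.le).deriv]
        set s := Real.sqrt (y^2+P) with hs_def
        have hs2 : s^2 = y^2 + P := Real.sq_sqrt (by positivity)
        have hs0 : 0 < s := Real.sqrt_pos.2 (by positivity)
        have hnum : y ≤ (P-3) * s := by
          have hyx2 : y^2 ≤ x^2 := by nlinarith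
          have hcoef : (0:ℝ) ≤ 1 - (P-3)^2 := by nlinarith
          have hsq : y^2 ≤ ((P-3)*s)^2 := by
            nlinarith [mul_le_mul_of_nonneg_right hyx2 hcoef]
          have := Real.sqrt_le_sqrt hsq
          rwa [Real.sqrt_sq hy0.le, Real.sqrt_sq (by nlinarith)] at this
        have hd : 0 < (P-1)*y + s := by nlinarith
        have hsy : 0 < s + y := by linarith
        have : (0:ℝ) ≤ P^2*((P-3)*s - y) := by nlinarith
        positivity
    have h0x : psi P 0 ≤ psi P x :=
      hmono (left_mem_Icc.2 hx.le) (right_mem_Icc.2 hx.le) hx.le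
    rw [psi_pi_zero] at h0x
    exact h0x
  · -- ψ is antitone on [x, ∞), and ψ → 0
    push_neg at hc
    have hsx2 : (Real.sqrt (x^2+P))^2 = x^2 + P := Real.sq_sqrt (by positivity)
    have hsx0 : 0 ≤ Real.sqrt (x^2+P) := Real.sqrt_nonneg _
    have hxsq : (P-3)^2 * (x^2 + P) ≤ x^2 := by
      nlinarith [mul_self_le_mul_self (by nlinarith : (0:ℝ) ≤ (P-3) * Real.sqrt (x^2+P)) hc.le]
    have hanti : AntitoneOn (psi P) (Ici x) := by
      apply antitoneOn_of_deriv_nonpos (convex_Ici x)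
      · intro y hy
        exact (psi_deriv P y hpi1 (le_trans hx.le hy)).continuousAt.continuousWithinAt
      · intro y hy
        rw [interior_Ici] at hy
        exact (psi_deriv P y hpi1 (le_trans hx.le hy.le)).differentiableAt.differentiableWithinAt
      · intro y hy
        rw [interior_Ici] at hy
        have hy0 : 0 < y := lt_trans hx hy
        rw [(psi_deriv P y hpi1 hy0.le).deriv]
        set s := Real.sqrt (y^2+P) with hs_def
        have hs2 : s^2 = y^2 + P := Real.sq_sqrt (by positivity)
        have hs0 : 0 < s := Real.sqrt_pos.2 (by positivity)
        have hnum : (P-3) * s ≤ y := by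
          have hyx2 : x^2 ≤ y^2 := by nlinarith [mem_Ioi.1 hy]
          have hcoef : (0:ℝ) ≤ 1 - (P-3)^2 := by nlinarith
          have hsq : ((P-3)*s)^2 ≤ y^2 := by
            nlinarith [mul_le_mul_of_nonneg_right hyx2 hcoef]
          have := Real.sqrt_le_sqrt hsq
          rwa [Real.sqrt_sq hy0.le, Real.sqrt_sq (by nlinarith)] at this
        have hd : 0 < (P-1)*y + s := by nlinarith
        have hsy : 0 < s + y := by linarith
        apply mul_nonpos_of_nonneg_of_nonpos (Real.exp_pos _).le
        apply div_nonpos_of_nonpos_of_nonneg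
        · nlinarith
        · positivity
    apply le_of_tendsto (psi_tendsto P hpi1)
    filter_upwards [eventually_ge_atTop x] with z hz
    exact hanti (self_mem_Ici) hz hz

set_option maxHeartbeats 1000000 in
lemma psi_four_neg (x : ℝ) (hx : 0 < x) : psi 4 x < 0 := by
  have h41 : (1:ℝ) < 4 := by norm_num
  have hmono : StrictMonoOn (psi 4) (Ici x) := by
    apply strictMonoOn_of_deriv_pos (convex_Ici x)
    · intro y hy
      exact (psi_deriv 4 y h41 (le_trans hx.le hy)).continuousAt.continuousWithinAt
    · intro y hy
      rw [interior_Ici] at hy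
      have hy0 : 0 < y := lt_trans hx hy
      rw [(psi_deriv 4 y h41 hy0.le).deriv]
      set s := Real.sqrt (y^2+4) with hs_def
      have hs2 : s^2 = y^2 + 4 := Real.sq_sqrt (by positivity)
      have hs0 : 0 < s := Real.sqrt_pos.2 (by positivity)
      have hnum : (0:ℝ) < 4^2*((4-3)*s - y) := by nlinarith
      have hd : 0 < ((4:ℝ)-1)*y + s := by nlinarith
      have hsy : 0 < s + y := by linarith
      positivity
  have hA : psi 4 x < psi 4 (x+1) :=
    hmono self_mem_Ici (mem_Ici.2 (by linarith)) (by linarith)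
  have hB : psi 4 (x+1) ≤ 0 := by
    apply ge_of_tendsto (psi_tendsto 4 h41)
    filter_upwards [eventually_ge_atTop (x+1)] with z hz
    exact hmono.monotoneOn (mem_Ici.2 (by linarith)) (mem_Ici.2 (by linarith)) hz
  exact lt_of_lt_of_le hA hB

theorem V0_g_bounds (x : ℝ) (hx : 0 < x) :
    g Real.pi x ≤ V0 x ∧ V0 x < g 4 x := by
  have hV : V0 x = 2 * Real.exp (x^2) * J x := V0_eq x hx
  constructor
  · have hkey := psi_pi_nonneg x hx
    have h1 : Real.exp (-x^2) * g Real.pi x ≤ 2 * J x := by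
      simpa [psi, sub_nonneg] using hkey
    have := mul_le_mul_of_nonneg_left h1 (Real.exp_pos (x^2)).le
    rw [← mul_assoc, ← Real.exp_add] at this
    simp only [add_neg_cancel, Real.exp_zero, one_mul] at this
    rw [hV]
    linarith [this]
  · have hlt := psi_four_neg x hx
    have h1 : 2 * J x < Real.exp (-x^2) * g 4 x := by
      simpa [psi, sub_neg] using hlt
    have := mul_lt_mul_of_pos_left h1 (Real.exp_pos (x^2))
    rw [show Real.exp (x^2) * (Real.exp (-x^2) * g 4 x)
        = Real.exp (x^2 + -x^2) * g 4 x from by rw [Real.exp_add]; ring] at this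
    simp only [add_neg_cancel, Real.exp_zero, one_mul] at this
    rw [hV]
    linarith [this]
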